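/- Let H be a maximizer of H ↦ vol_k([0,1]^n | H) over k-dimensional subspaces of ℝ^n, and let v_i be the orthogonal projection of e_i onto H. Then for any i, j ∈ [n]: |v_i|² ≥ (√2 − 1)|v_j|². -/

import Mathlib

open scoped Matrix

/-- Shephard's formula: the `k`-dimensional volume of the zonotope
`∑ᵢ [0, vᵢ] ⊆ ℝ^k` (equivalently, of the projection of the cube `[0,1]^n` onto
the subspace corresponding to the tight frame `v`), namely
`∑_{L ∈ C([n],k)} |det (v_{i₁}, ..., v_{i_k})|`. -/
noncomputable def zonVol {n k : ℕ} (v : Fin n → Fin k → ℝ) : ℝ :=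
  ∑ L : {s : Finset (Fin n) // s.card = k},
    |Matrix.det (Matrix.of fun a b : Fin k => v (L.1.orderIsoOfFin L.2 b) a)|

namespace Stmt17

variable {n k : ℕ}

noncomputable def mat (v : Fin n → Fin k → ℝ) (L : {s : Finset (Fin n) // s.card = k}) :
    Matrix (Fin k) (Fin k) ℝ :=
  Matrix.of fun a b : Fin k => v (L.1.orderIsoOfFin L.2 b) a

lemma zonVol_eq (v : Fin n → Fin k → ℝ) :
    zonVol v = ∑ L : {s : Finset (Fin n) // s.card = k}, |(mat v L).det| := rfl

section DetHelpers

variable {k : ℕ}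

lemma det_uC_sub (X : Matrix (Fin k) (Fin k) ℝ) (q : Fin k) (a b : Fin k → ℝ) :
    (X.updateCol q (a - b)).det = (X.updateCol q a).det - (X.updateCol q b).det := by
  have h1 : a - b = a + (-1 : ℝ) • b := by funext c; simp; ring
  rw [h1, Matrix.det_updateCol_add, Matrix.det_updateCol_smul]
  ring

lemma uC_comm (X : Matrix (Fin k) (Fin k) ℝ) (p q : Fin k) (hpq : p ≠ q) (a b : Fin k → ℝ) :
    (X.updateCol p a).updateCol q b = (X.updateCol q b).updateCol p a := by
  ext r s
  by_cases h1 : s = q <;> by_cases h2 : s = p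
  · exact absurd (h2.symm.trans h1) hpq
  · subst h1
    rw [Matrix.updateCol_self, Matrix.updateCol_ne h2, Matrix.updateCol_self]
  · subst h2
    rw [Matrix.updateCol_ne h1, Matrix.updateCol_self, Matrix.updateCol_self]
  · rw [Matrix.updateCol_ne h1, Matrix.updateCol_ne h2, Matrix.updateCol_ne h2,
      Matrix.updateCol_ne h1]

lemma det_swap_cols (X : Matrix (Fin k) (Fin k) ℝ) (p q : Fin k) (hpq : p ≠ q) :
    ((X.updateCol p (fun a => X a q)).updateCol q (fun a => X a p)).det = - X.det := by
  have h : (X.updateCol p (fun a => X a q)).updateCol q (fun a => X a p)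
      = X.submatrix id (Equiv.swap p q) := by
    ext r s
    by_cases h1 : s = q
    · rw [h1, Matrix.updateCol_self]
      simp [Equiv.swap_apply_right]
    · by_cases h2 : s = p
      · rw [Matrix.updateCol_ne h1, h2, Matrix.updateCol_self]
        simp [Equiv.swap_apply_left]
      · rw [Matrix.updateCol_ne h1, Matrix.updateCol_ne h2]
        simp [Equiv.swap_apply_of_ne_of_ne h2 h1]
  rw [h, Matrix.det_permute' (Equiv.swap p q) X, Equiv.Perm.sign_swap hpq]
  simp

lemma det_two_eq_cols (X : Matrix (Fin k) (Fin k) ℝ) (p q : Fin k) (hpq : p ≠ q)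
    (x : Fin k → ℝ) :
    ((X.updateCol p x).updateCol q x).det = 0 := by
  refine Matrix.det_zero_of_column_eq hpq fun r => ?_
  rw [Matrix.updateCol_ne hpq, Matrix.updateCol_self, Matrix.updateCol_self]

end DetHelpers

section MatUpdate

variable {n k : ℕ}

lemma mat_update_mem (u : Fin n → Fin k → ℝ) (i : Fin n) (x : Fin k → ℝ)
    (L : {s : Finset (Fin n) // s.card = k}) (hi : i ∈ L.1) :
    mat (Function.update u i x) L
      = (mat u L).updateCol ((L.1.orderIsoOfFin L.2).symm ⟨i, hi⟩) x := by
  ext a b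
  by_cases hb : b = (L.1.orderIsoOfFin L.2).symm ⟨i, hi⟩
  · rw [hb]
    show (Function.update u i x)
        (L.1.orderIsoOfFin L.2 ((L.1.orderIsoOfFin L.2).symm ⟨i, hi⟩)) a = _
    rw [Matrix.updateCol_self, OrderIso.apply_symm_apply, Function.update_self]
  · have hne : (L.1.orderIsoOfFin L.2 b : Fin n) ≠ i := by
      intro h
      apply hb
      have : L.1.orderIsoOfFin L.2 b = (⟨i, hi⟩ : L.1) := Subtype.ext h
      rw [← this, OrderIso.symm_apply_apply]
    show (Function.update u i x) (L.1.orderIsoOfFin L.2 b) a = _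
    rw [Matrix.updateCol_ne hb, Function.update_of_ne hne]
    rfl

lemma mat_update_notmem (u : Fin n → Fin k → ℝ) (i : Fin n) (x : Fin k → ℝ)
    (L : {s : Finset (Fin n) // s.card = k}) (hi : i ∉ L.1) :
    mat (Function.update u i x) L = mat u L := by
  ext a b
  have hne : (L.1.orderIsoOfFin L.2 b : Fin n) ≠ i := by
    intro h; exact hi (h ▸ (L.1.orderIsoOfFin L.2 b).2)
  show (Function.update u i x) (L.1.orderIsoOfFin L.2 b) a = u (L.1.orderIsoOfFin L.2 b) a
  rw [Function.update_of_ne hne]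

lemma mat_col (u : Fin n → Fin k → ℝ) (i : Fin n)
    (L : {s : Finset (Fin n) // s.card = k}) (hi : i ∈ L.1) (a : Fin k) :
    (mat u L) a ((L.1.orderIsoOfFin L.2).symm ⟨i, hi⟩) = u i a := by
  show u (L.1.orderIsoOfFin L.2 ((L.1.orderIsoOfFin L.2).symm ⟨i, hi⟩)) a = u i a
  rw [OrderIso.apply_symm_apply]

end MatUpdate


section RotCore

variable {k : ℕ}

lemma both_core (X : Matrix (Fin k) (Fin k) ℝ) (p0 q0 : Fin k) (hpq : p0 ≠ q0)
    (x y : Fin k → ℝ) (hXp : ∀ a, X a p0 = x a) (hXq : ∀ a, X a q0 = y a)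
    (c : ℝ) (hc : c*c = 1/2) :
    ((X.updateCol p0 (c • (x + y))).updateCol q0 (c • (x - y))).det = - X.det := by
  have hxX : x = fun a => X a p0 := funext fun a => (hXp a).symm
  have hyX : y = fun a => X a q0 := funext fun a => (hXq a).symm
  rw [Matrix.det_updateCol_smul, det_uC_sub,
    uC_comm X p0 q0 hpq (c • (x + y)) x, uC_comm X p0 q0 hpq (c • (x + y)) y,
    Matrix.det_updateCol_smul, Matrix.det_updateCol_smul,
    Matrix.det_updateCol_add, Matrix.det_updateCol_add]
  have hq0p0 : q0 ≠ p0 := Ne.symm hpq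
  have t1 : (((X.updateCol q0 x).updateCol p0 x)).det = 0 :=
    det_two_eq_cols _ q0 p0 hq0p0 x
  have t4 : (((X.updateCol q0 y).updateCol p0 y)).det = 0 :=
    det_two_eq_cols _ q0 p0 hq0p0 y
  have t3 : (((X.updateCol q0 y).updateCol p0 x)).det = X.det := by
    rw [hyX, Matrix.updateCol_eq_self, hxX, Matrix.updateCol_eq_self]
  have t2 : (((X.updateCol q0 x).updateCol p0 y)).det = - X.det := by
    rw [hyX, hxX]
    exact det_swap_cols X q0 p0 hq0p0
  rw [t1, t2, t3, t4]
  linear_combination (-2 * X.det) * hc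

lemma pair_core (X X' : Matrix (Fin k) (Fin k) ℝ) (p0 q0 : Fin k) (π : Equiv.Perm (Fin k))
    (x y : Fin k → ℝ)
    (hXp : ∀ a, X a p0 = x a) (hX'q : ∀ a, X' a q0 = y a)
    (hkey : ∀ z : Fin k → ℝ, X'.updateCol q0 z = (X.updateCol p0 z).submatrix id π)
    (c : ℝ) (hc : c * c = 1/2) (hc0 : 0 ≤ c) :
    2*c * |X'.det| ≤ |(X.updateCol p0 (c • (x + y))).det|
      + |(X'.updateCol q0 (c • (x - y))).det| := by
  have hxX : x = fun a => X a p0 := funext fun a => (hXp a).symm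
  have hyX' : y = fun a => X' a q0 := funext fun a => (hX'q a).symm
  have hselfX : X.updateCol p0 x = X := by rw [hxX, Matrix.updateCol_eq_self]
  have hselfX' : X'.updateCol q0 y = X' := by rw [hyX', Matrix.updateCol_eq_self]
  set A := X.det with hA
  set B := (X.updateCol p0 y).det with hB
  have hd1 : (X.updateCol p0 (c • (x+y))).det = c * (A + B) := by
    rw [Matrix.det_updateCol_smul, Matrix.det_updateCol_add, hselfX]
  have habs2 : 2*c*|B| ≤ |c * (A+B)| + |c * (A-B)| := by
    have h2b : |2*B| ≤ |A+B| + |A-B| := by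
      have h := abs_sub (A+B) (A-B)
      rw [show (A+B) - (A-B) = 2*B by ring] at h
      exact h
    have h2b' : |2*B| = 2 * |B| := by rw [abs_mul]; norm_num
    rw [abs_mul c (A+B), abs_mul c (A-B), abs_of_nonneg hc0, ← mul_add]
    calc 2*c*|B| = c * (2*|B|) := by ring
      _ = c * |2*B| := by rw [h2b']
      _ ≤ c * (|A+B| + |A-B|) := mul_le_mul_of_nonneg_left h2b hc0
  rcases Int.units_eq_one_or (Equiv.Perm.sign π) with hs | hs
  · have hdet : ∀ z : Fin k → ℝ, (X'.updateCol q0 z).det = (X.updateCol p0 z).det := by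
      intro z
      rw [hkey z, Matrix.det_permute', hs]
      simp
    have hB' : X'.det = B := by rw [← hselfX', hdet y, hB]
    have hd2 : (X'.updateCol q0 (c • (x - y))).det = c * (A - B) := by
      rw [Matrix.det_updateCol_smul, det_uC_sub, hdet x, hdet y, hselfX, ← hA, ← hB]
    rw [hB', hd1, hd2]
    exact habs2
  · have hdet : ∀ z : Fin k → ℝ, (X'.updateCol q0 z).det = -(X.updateCol p0 z).det := by
      intro z
      rw [hkey z, Matrix.det_permute', hs]
      simp
    have hB' : X'.det = -B := by rw [← hselfX', hdet y, hB]
    have hd2 : (X'.updateCol q0 (c • (x - y))).det = -(c * (A - B)) := by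
      rw [Matrix.det_updateCol_smul]
      rw [show (X'.updateCol q0 (x - y)).det = -((X.updateCol p0 (x-y)).det) from hdet _]
      rw [det_uC_sub, hselfX, ← hA, ← hB]
      ring
    rw [hB', hd1, hd2, abs_neg, abs_neg]
    exact habs2
end RotCore


noncomputable def rotW (v : Fin n → Fin k → ℝ) (i j : Fin n) (c : ℝ) : Fin n → Fin k → ℝ :=
  Function.update (Function.update v i (c • (v i + v j))) j (c • (v i - v j))

section Rot

variable (v : Fin n → Fin k → ℝ) (i j : Fin n)

lemma rot_neither (c : ℝ) (L : {s : Finset (Fin n) // s.card = k})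
    (hi : i ∉ L.1) (hj : j ∉ L.1) :
    mat (rotW v i j c) L = mat v L := by
  rw [rotW, mat_update_notmem _ j _ L hj, mat_update_notmem _ i _ L hi]

lemma rot_both (c : ℝ) (hc : c*c = 1/2) (hij : i ≠ j) (L : {s : Finset (Fin n) // s.card = k})
    (hi : i ∈ L.1) (hj : j ∈ L.1) :
    (mat (rotW v i j c) L).det = - (mat v L).det := by
  rw [rotW, mat_update_mem _ j _ L hj, mat_update_mem _ i _ L hi]
  have hpq : (L.1.orderIsoOfFin L.2).symm ⟨i, hi⟩ ≠ (L.1.orderIsoOfFin L.2).symm ⟨j, hj⟩ := by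
    intro h
    apply hij
    have h2 := congrArg (fun b => ((L.1.orderIsoOfFin L.2) b : Fin n)) h
    simpa using h2
  exact both_core _ _ _ hpq (v i) (v j) (mat_col v i L hi) (mat_col v j L hj) c hc

lemma rot_pair (c : ℝ) (hc : c*c = 1/2) (hc0 : 0 ≤ c) (hij : i ≠ j)
    (L L' : {s : Finset (Fin n) // s.card = k})
    (hi : i ∈ L.1) (hj : j ∉ L.1) (hL' : L'.1 = insert j (L.1.erase i)) :
    2*c * |(mat v L').det|
      ≤ |(mat (rotW v i j c) L).det| + |(mat (rotW v i j c) L').det| := by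
  have hj' : j ∈ L'.1 := by rw [hL']; exact Finset.mem_insert_self _ _
  have hi' : i ∉ L'.1 := by rw [hL']; simp [hij]
  have hmL : mat (rotW v i j c) L
      = (mat v L).updateCol ((L.1.orderIsoOfFin L.2).symm ⟨i, hi⟩) (c • (v i + v j)) := by
    rw [rotW, mat_update_notmem _ j _ L hj, mat_update_mem _ i _ L hi]
  have hmL' : mat (rotW v i j c) L'
      = (mat v L').updateCol ((L'.1.orderIsoOfFin L'.2).symm ⟨j, hj'⟩) (c • (v i - v j)) := by
    rw [rotW, mat_update_mem _ j _ L' hj', mat_update_notmem _ i _ L' hi']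
  rw [hmL, hmL']
  set q0 := (L'.1.orderIsoOfFin L'.2).symm ⟨j, hj'⟩ with hq0
  set p0 := (L.1.orderIsoOfFin L.2).symm ⟨i, hi⟩ with hp0
  have hmem : ∀ b : Fin k, b ≠ q0 →
      ((L'.1.orderIsoOfFin L'.2 b : Fin n)) ∈ L.1.erase i := by
    intro b hb
    have h1 : (L'.1.orderIsoOfFin L'.2 b : Fin n) ∈ insert j (L.1.erase i) := by
      rw [← hL']; exact (L'.1.orderIsoOfFin L'.2 b).2
    rcases Finset.mem_insert.1 h1 with h2 | h2
    · exfalso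
      apply hb
      have h3 : L'.1.orderIsoOfFin L'.2 b = (⟨j, hj'⟩ : {x // x ∈ L'.1}) := Subtype.ext h2
      rw [hq0, ← h3, OrderIso.symm_apply_apply]
    · exact h2
  set π : Fin k → Fin k := fun b =>
    if hb : b = q0 then p0
    else (L.1.orderIsoOfFin L.2).symm ⟨(L'.1.orderIsoOfFin L'.2 b : Fin n),
      Finset.mem_of_mem_erase (hmem b hb)⟩ with hπ
  have hπq0 : π q0 = p0 := by rw [hπ]; exact dif_pos rfl
  have hπne : ∀ b, b ≠ q0 →
      ((L.1.orderIsoOfFin L.2) (π b) : Fin n) = (L'.1.orderIsoOfFin L'.2 b : Fin n) := by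
    intro b hb
    rw [hπ]
    simp only [dif_neg hb]
    rw [OrderIso.apply_symm_apply]
  have hπnei : ∀ b, b ≠ q0 → ((L.1.orderIsoOfFin L.2) (π b) : Fin n) ≠ i := by
    intro b hb
    rw [hπne b hb]
    exact (Finset.mem_erase.1 (hmem b hb)).1
  have hπnep0 : ∀ b, b ≠ q0 → π b ≠ p0 := by
    intro b hb h
    apply hπnei b hb
    rw [h, hp0, OrderIso.apply_symm_apply]
  have hinj : Function.Injective π := by
    intro b1 b2 h
    by_cases h1 : b1 = q0 <;> by_cases h2 : b2 = q0
    · rw [h1, h2]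
    · exfalso; rw [h1, hπq0] at h; exact hπnep0 b2 h2 h.symm
    · exfalso; rw [h2, hπq0] at h; exact hπnep0 b1 h1 h
    · have h3 := congrArg (fun t => ((L.1.orderIsoOfFin L.2) t : Fin n)) h
      simp only [hπne b1 h1, hπne b2 h2] at h3
      have h4 : L'.1.orderIsoOfFin L'.2 b1 = L'.1.orderIsoOfFin L'.2 b2 := Subtype.ext h3
      exact (L'.1.orderIsoOfFin L'.2).injective h4
  set πe : Equiv.Perm (Fin k) := Equiv.ofBijective π (Finite.injective_iff_bijective.1 hinj)
    with hπe
  have hπeapp : ∀ b, πe b = π b := fun b => rfl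
  have hkey : ∀ z : Fin k → ℝ,
      (mat v L').updateCol q0 z = ((mat v L).updateCol p0 z).submatrix id πe := by
    intro z
    ext a b
    by_cases hb : b = q0
    · rw [hb, Matrix.updateCol_self]
      symm
      show ((mat v L).updateCol p0 z) a (πe q0) = z a
      rw [hπeapp, hπq0, Matrix.updateCol_self]
    · rw [Matrix.updateCol_ne hb]
      symm
      show ((mat v L).updateCol p0 z) a (πe b) = (mat v L') a b
      rw [hπeapp, Matrix.updateCol_ne (hπnep0 b hb)]
      show v ((L.1.orderIsoOfFin L.2) (π b)) a = v (L'.1.orderIsoOfFin L'.2 b) a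
      rw [hπne b hb]
  exact pair_core (mat v L) (mat v L') p0 q0 πe (v i) (v j)
    (mat_col v i L hi) (mat_col v j L' hj') hkey c hc hc0

end Rot


section Frame

variable {v : Fin n → Fin k → ℝ}
  (hv : ∑ i, Matrix.vecMulVec (v i) (v i) = (1 : Matrix (Fin k) (Fin k) ℝ))

include hv

lemma frame_entry (b c : Fin k) :
    ∑ m, v m b * v m c = if b = c then (1:ℝ) else 0 := by
  have h2 : (∑ i, Matrix.vecMulVec (v i) (v i)) b c = (1 : Matrix (Fin k) (Fin k) ℝ) b c := by
    rw [hv]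
  simpa [Matrix.sum_apply, Matrix.vecMulVec_apply, Matrix.one_apply] using h2

lemma frame_sum1 (x : Fin k → ℝ) (c : Fin k) :
    ∑ m, (x ⬝ᵥ v m) * v m c = x c := by
  have h : ∑ m, (x ⬝ᵥ v m) * v m c = ∑ b, x b * ∑ m, v m b * v m c := by
    calc ∑ m, (x ⬝ᵥ v m) * v m c = ∑ m, ∑ b, x b * (v m b * v m c) := by
          refine Finset.sum_congr rfl fun m _ => ?_
          rw [dotProduct, Finset.sum_mul]
          refine Finset.sum_congr rfl fun b _ => by ring
      _ = ∑ b, ∑ m, x b * (v m b * v m c) := Finset.sum_comm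
      _ = ∑ b, x b * ∑ m, v m b * v m c := by
          refine Finset.sum_congr rfl fun b _ => ?_
          rw [Finset.mul_sum]
  rw [h]
  simp only [frame_entry hv, mul_ite, mul_one, mul_zero]
  simp

lemma frame_sum2 (i : Fin n) :
    ∑ m, (v i ⬝ᵥ v m) * (v i ⬝ᵥ v m) = v i ⬝ᵥ v i := by
  have h : ∑ m, (v i ⬝ᵥ v m) * (v i ⬝ᵥ v m)
      = ∑ c, v i c * ∑ m, (v i ⬝ᵥ v m) * v m c := by
    calc ∑ m, (v i ⬝ᵥ v m) * (v i ⬝ᵥ v m)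
        = ∑ m, ∑ c, v i c * ((v i ⬝ᵥ v m) * v m c) := by
          refine Finset.sum_congr rfl fun m _ => ?_
          conv_lhs => rw [show v i ⬝ᵥ v m * (v i ⬝ᵥ v m) = (v i ⬝ᵥ v m) * ∑ c, v i c * v m c from rfl]
          rw [Finset.mul_sum]
          refine Finset.sum_congr rfl fun c _ => by ring
      _ = ∑ c, ∑ m, v i c * ((v i ⬝ᵥ v m) * v m c) := Finset.sum_comm
      _ = ∑ c, v i c * ∑ m, (v i ⬝ᵥ v m) * v m c := by
          refine Finset.sum_congr rfl fun c _ => ?_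
          rw [Finset.mul_sum]
  rw [h]
  simp only [frame_sum1 hv]
  rfl

omit hv in
lemma p_nonneg (i : Fin n) : (0:ℝ) ≤ v i ⬝ᵥ v i :=
  Finset.sum_nonneg fun c _ => mul_self_nonneg _

lemma p_le_one (i : Fin n) : v i ⬝ᵥ v i ≤ 1 := by
  have h := frame_sum2 hv i
  have h1 : (v i ⬝ᵥ v i) * (v i ⬝ᵥ v i) ≤ ∑ m, (v i ⬝ᵥ v m) * (v i ⬝ᵥ v m) := by
    have := Finset.single_le_sum (f := fun m => (v i ⬝ᵥ v m) * (v i ⬝ᵥ v m))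
      (fun m _ => mul_self_nonneg _) (Finset.mem_univ i)
    simpa using this
  rw [h] at h1
  nlinarith [p_nonneg (v := v) i, sq_nonneg (v i ⬝ᵥ v i - 1)]

end Frame

noncomputable def Fi (v : Fin n → Fin k → ℝ) (i : Fin n) : ℝ :=
  ∑ L : {s : Finset (Fin n) // s.card = k}, if i ∈ L.1 then |(mat v L).det| else 0

lemma Fi_nonneg (v : Fin n → Fin k → ℝ) (i : Fin n) : 0 ≤ Fi v i :=
  Finset.sum_nonneg fun L _ => by positivity

lemma Fi_le (v : Fin n → Fin k → ℝ) (i : Fin n) : Fi v i ≤ zonVol v := by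
  rw [zonVol_eq]
  refine Finset.sum_le_sum fun L _ => ?_
  split <;> simp [abs_nonneg]

section ScaleIneq

variable {v : Fin n → Fin k → ℝ}
  (hv : ∑ i, Matrix.vecMulVec (v i) (v i) = (1 : Matrix (Fin k) (Fin k) ℝ))
  (hmax : ∀ w : Fin n → Fin k → ℝ,
      (∑ i, Matrix.vecMulVec (w i) (w i) = (1 : Matrix (Fin k) (Fin k) ℝ)) →
      zonVol w ≤ zonVol v)

include hv hmax

lemma scale_ineq (i : Fin n) (α : ℝ) (hα : |α| ≤ 1/4) :
    (1 + α * (v i ⬝ᵥ v i)) * (zonVol v - Fi v i)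
      + Real.sqrt (1 + (2*α + α^2*(v i ⬝ᵥ v i))*((v i ⬝ᵥ v i)-1)) * Fi v i ≤ zonVol v := by
  obtain ⟨hα1, hα2⟩ := abs_le.1 hα
  set p := v i ⬝ᵥ v i with hpdef
  have hp0 : 0 ≤ p := p_nonneg i
  have hp1 : p ≤ 1 := p_le_one hv i
  have hrad : 0 ≤ 1 + (2*α + α^2*p)*(p-1) := by nlinarith [sq_nonneg α, sq_nonneg (α*p)]
  have hsp : 0 < 1 + α * p := by nlinarith
  set β := Real.sqrt (1 + (2*α + α^2*p)*(p-1)) with hβdef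
  have hβ0 : 0 ≤ β := Real.sqrt_nonneg _
  have hβ : β * β = 1 + (2*α + α^2*p)*(p-1) := Real.mul_self_sqrt hrad
  set w : Fin n → Fin k → ℝ :=
    Function.update (fun m => v m + (α * (v i ⬝ᵥ v m)) • v i) i (β • v i) with hwdef
  -- w is a tight frame
  have hwframe : ∑ m, Matrix.vecMulVec (w m) (w m) = (1 : Matrix (Fin k) (Fin k) ℝ) := by
    ext b c
    rw [Matrix.sum_apply]
    simp only [Matrix.vecMulVec_apply]
    have hupd : (fun m => w m b * w m c) = Function.update
        (fun m => (v m b + α * (v i ⬝ᵥ v m) * v i b) * (v m c + α * (v i ⬝ᵥ v m) * v i c))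
        i ((β * v i b) * (β * v i c)) := by
      funext m
      by_cases hm : m = i
      · subst hm; rw [hwdef]; simp [Function.update_self]
      · rw [hwdef]; simp [Function.update_of_ne hm]
    rw [hupd, Finset.sum_update_of_mem (Finset.mem_univ i)]
    have hsd : ∀ g : Fin n → ℝ, ∑ m ∈ Finset.univ \ {i}, g m = (∑ m, g m) - g i := by
      intro g
      rw [Finset.sum_sdiff_eq_sub (Finset.singleton_subset_iff.2 (Finset.mem_univ i)),
        Finset.sum_singleton]
    rw [hsd]
    have hg : ∀ m, (v m b + α * (v i ⬝ᵥ v m) * v i b) * (v m c + α * (v i ⬝ᵥ v m) * v i c)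
        = v m b * v m c + ((v i ⬝ᵥ v m) * v m c) * (α * v i b)
          + ((v i ⬝ᵥ v m) * v m b) * (α * v i c)
          + ((v i ⬝ᵥ v m) * (v i ⬝ᵥ v m)) * (α^2 * (v i b * v i c)) := fun m => by ring
    simp only [hg]
    rw [Finset.sum_add_distrib, Finset.sum_add_distrib, Finset.sum_add_distrib,
      ← Finset.sum_mul, ← Finset.sum_mul, ← Finset.sum_mul,
      frame_entry hv b c, frame_sum1 hv (v i) c, frame_sum1 hv (v i) b, frame_sum2 hv i,
      Matrix.one_apply]
    rw [← hpdef]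
    linear_combination (v i b * v i c) * hβ
  -- determinant of the scaling matrix
  set S : Matrix (Fin k) (Fin k) ℝ := 1 + α • Matrix.vecMulVec (v i) (v i) with hSdef
  have hSvmv : α • Matrix.vecMulVec (v i) (v i) = Matrix.vecMulVec (α • v i) (v i) := by
    ext a b; simp [Matrix.vecMulVec_apply]; ring
  have hSdet : S.det = 1 + α * p := by
    rw [hSdef, hSvmv, Matrix.vecMulVec_eq Unit, Matrix.det_one_add_replicateCol_mul_replicateRow,
      dotProduct_smul, smul_eq_mul, hpdef]
  have hSapp : ∀ (a : Fin k) (x : Fin k → ℝ),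
      (∑ c, S a c * x c) = x a + α * v i a * (v i ⬝ᵥ x) := by
    intro a x
    rw [hSdef]
    simp only [Matrix.add_apply, Matrix.one_apply, Matrix.smul_apply,
      Matrix.vecMulVec_apply, smul_eq_mul]
    simp only [add_mul]
    rw [Finset.sum_add_distrib]
    congr 1
    · simp [Finset.sum_ite_eq]
    · rw [dotProduct, Finset.mul_sum]
      exact Finset.sum_congr rfl fun c _ => by ring
  -- determinants of w-minors
  have hdet_notmem : ∀ L : {s : Finset (Fin n) // s.card = k}, i ∉ L.1 →
      (mat w L).det = (1 + α * p) * (mat v L).det := by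
    intro L hiL
    have hm : mat w L = S * mat v L := by
      ext a b'
      rw [Matrix.mul_apply, hSapp]
      have hne : (L.1.orderIsoOfFin L.2 b' : Fin n) ≠ i := by
        intro h; exact hiL (h ▸ (L.1.orderIsoOfFin L.2 b').2)
      show w (L.1.orderIsoOfFin L.2 b') a = _
      rw [hwdef]
      simp only [Function.update_of_ne hne, Pi.add_apply, Pi.smul_apply, smul_eq_mul, mat,
        Matrix.of_apply]
      ring
    rw [hm, Matrix.det_mul, hSdet]
  have hdet_mem : ∀ L : {s : Finset (Fin n) // s.card = k}, i ∈ L.1 →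
      (mat w L).det = β * (mat v L).det := by
    intro L hiL
    set e := L.1.orderIsoOfFin L.2 with hedef
    set p0 := e.symm ⟨i, hiL⟩ with hp0def
    have hep0 : (e p0 : Fin n) = i := by rw [hp0def, OrderIso.apply_symm_apply]
    have hcol : ∀ a, (mat v L) a p0 = v i a := by
      intro a; show v (e p0) a = v i a; rw [hep0]
    have hm : mat w L = S * ((mat v L).updateCol p0 ((β/(1+α*p)) • v i)) := by
      ext a b'
      rw [Matrix.mul_apply]
      by_cases hb : b' = p0
      · have hcol2 : ∀ c, ((mat v L).updateCol p0 ((β/(1+α*p)) • v i)) c b'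
            = (β/(1+α*p)) * v i c := by
          intro c; rw [hb, Matrix.updateCol_self]; simp
        simp only [hcol2]
        have hpull : (∑ c, S a c * ((β/(1+α*p)) * v i c)) = (β/(1+α*p)) * ∑ c, S a c * v i c := by
          rw [Finset.mul_sum]; exact Finset.sum_congr rfl fun c _ => by ring
        rw [hpull]
        have hSvi : (∑ c, S a c * v i c) = v i a + α * v i a * (v i ⬝ᵥ v i) := hSapp a (v i)
        rw [hSvi]
        show w (e b') a = _
        rw [hwdef]
        have heb : (e b' : Fin n) = i := by rw [hb]; exact hep0
        rw [heb]
        simp only [Function.update_self, Pi.smul_apply, smul_eq_mul]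
        rw [← hpdef]
        field_simp
      · have hne : (e b' : Fin n) ≠ i := by
          intro h
          apply hb
          have : e b' = ⟨i, hiL⟩ := Subtype.ext h
          rw [hp0def, ← this, OrderIso.symm_apply_apply]
        have : ∀ c, ((mat v L).updateCol p0 ((β/(1+α*p)) • v i)) c b' = (mat v L) c b' := by
          intro c; rw [Matrix.updateCol_ne hb]
        simp only [this]
        rw [hSapp]
        show w (e b') a = _
        rw [hwdef]
        simp only [Function.update_of_ne hne, Pi.add_apply, Pi.smul_apply, smul_eq_mul, mat,
          Matrix.of_apply]
        ring
    rw [hm, Matrix.det_mul, hSdet]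
    have hupdc : ((β/(1+α*p)) • v i) = (β/(1+α*p)) • (fun a => (mat v L) a p0) := by
      funext a; simp [hcol]
    rw [hupdc, Matrix.det_updateCol_smul, Matrix.updateCol_eq_self]
    field_simp
  -- value of zonVol w
  have hzw : zonVol w = (1 + α * p) * (zonVol v - Fi v i) + β * Fi v i := by
    rw [zonVol_eq]
    have : ∀ L : {s : Finset (Fin n) // s.card = k},
        |(mat w L).det| = β * (if i ∈ L.1 then |(mat v L).det| else 0)
          + (1 + α * p) * |(mat v L).det|
          - (1 + α * p) * (if i ∈ L.1 then |(mat v L).det| else 0) := by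
      intro L
      by_cases hiL : i ∈ L.1
      · rw [hdet_mem L hiL, if_pos hiL, abs_mul, abs_of_nonneg hβ0]; ring
      · rw [hdet_notmem L hiL, if_neg hiL, abs_mul, abs_of_pos hsp]; ring
    simp only [this]
    rw [Finset.sum_sub_distrib, Finset.sum_add_distrib, ← Finset.mul_sum, ← Finset.mul_sum,
      ← Finset.mul_sum, ← zonVol_eq]
    have hFidef : Fi v i
        = ∑ L : {s : Finset (Fin n) // s.card = k}, if i ∈ L.1 then |(mat v L).det| else 0 := rfl
    rw [← hFidef]
    ring
  have := hmax w hwframe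
  rw [hzw] at this
  linarith


omit hmax in
lemma zonVol_nonneg' : 0 ≤ zonVol v := by
  rw [zonVol_eq]; exact Finset.sum_nonneg fun L _ => abs_nonneg _

lemma lemA (i : Fin n) : Fi v i = (v i ⬝ᵥ v i) * zonVol v := by
  have hp0 : 0 ≤ v i ⬝ᵥ v i := p_nonneg i
  have hp1 : v i ⬝ᵥ v i ≤ 1 := p_le_one hv i
  set p := v i ⬝ᵥ v i
  set F := zonVol v with hFdef
  set G := Fi v i with hGdef
  have hG0 : 0 ≤ G := Fi_nonneg v i
  have hGF : G ≤ F := Fi_le v i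
  have hF0 : 0 ≤ F := zonVol_nonneg' hv
  have key : ∀ α : ℝ, |α| ≤ 1/4 →
      2*α*(G*(p*F - G)) ≤ α^2 * (p^2*(F-G)^2 - p*(p-1)*G^2) := by
    intro α hα
    obtain ⟨hα1, hα2⟩ := abs_le.1 hα
    have h := scale_ineq hv hmax i α hα
    have hrad : 0 ≤ 1 + (2*α + α^2*p)*(p-1) := by nlinarith [sq_nonneg α, sq_nonneg (α*p)]
    set β := Real.sqrt (1 + (2*α + α^2*p)*(p-1)) with hβdef
    have hβ0 : 0 ≤ β := Real.sqrt_nonneg _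
    have hβ : β * β = 1 + (2*α + α^2*p)*(p-1) := Real.mul_self_sqrt hrad
    have h2 : β * G ≤ G - α * p * (F - G) := by linarith
    have h3 : (β*G)*(β*G) ≤ (G - α*p*(F-G))*(G - α*p*(F-G)) :=
      mul_self_le_mul_self (mul_nonneg hβ0 hG0) h2
    have h4 : (1 + (2*α + α^2*p)*(p-1))*(G*G) ≤ (G - α*p*(F-G))*(G - α*p*(F-G)) := by
      calc (1 + (2*α + α^2*p)*(p-1))*(G*G) = (β*G)*(β*G) := by rw [← hβ]; ring
        _ ≤ _ := h3
    nlinarith [h4]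
  set D := G*(p*F - G) with hDdef
  set C := p^2*(F-G)^2 - p*(p-1)*G^2 with hCdef
  have hD : D = 0 := by
    by_contra hne
    set ε := min (1/4) (|D|/(|C|+1)) with hεdef
    have hC1 : 0 < |C| + 1 := by positivity
    have hε0 : 0 < ε := lt_min (by norm_num) (div_pos (abs_pos.2 hne) hC1)
    have hε14 : ε ≤ 1/4 := min_le_left _ _
    have hεC : ε * (|C|+1) ≤ |D| := by
      have hεD : ε ≤ |D|/(|C|+1) := min_le_right _ _
      calc ε * (|C|+1) ≤ (|D|/(|C|+1)) * (|C|+1) := by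
            exact mul_le_mul_of_nonneg_right hεD (le_of_lt hC1)
        _ = |D| := by field_simp
    set α := if 0 < D then ε else -ε with hαdef
    have hαabs : |α| ≤ 1/4 := by
      rw [hαdef]; split
      · rw [abs_of_pos hε0]; exact hε14
      · rw [abs_neg, abs_of_pos hε0]; exact hε14
    have hαD : α * D = ε * |D| := by
      rw [hαdef]; split
      · rename_i hpos; rw [abs_of_pos hpos]
      · rename_i hnpos
        have hneg : D < 0 := lt_of_le_of_ne (not_lt.1 hnpos) hne
        rw [abs_of_neg hneg]; ring
    have hα2 : α^2 = ε^2 := by rw [hαdef]; split <;> ring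
    have hk := key α hαabs
    rw [hα2] at hk
    have hk2 : 2*(ε*|D|) ≤ ε^2 * C := by
      calc 2*(ε*|D|) = 2*(α*D) := by rw [hαD]
        _ = 2*α*(G*(p*F-G)) := by rw [hDdef]; ring
        _ ≤ ε^2 * (p^2*(F-G)^2 - p*(p-1)*G^2) := hk
        _ = ε^2 * C := by rw [hCdef]
    have hCle : C ≤ |C| := le_abs_self C
    have habsD : 0 < |D| := abs_pos.2 hne
    nlinarith [hk2, hεC, hε0, habsD, sq_nonneg ε]
  rcases mul_eq_zero.1 hD with hG | hPF
  · rw [hGdef] at hG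
    rw [hGdef, hG]
    have h := scale_ineq hv hmax i (1/4) (by rw [abs_of_pos] <;> norm_num)
    rw [hG] at h
    have hpF : p * F ≤ 0 := by nlinarith [h]
    have : p * F = 0 := le_antisymm hpF (mul_nonneg hp0 hF0)
    rw [this]
  · linarith


end ScaleIneq

section LemB

variable {v : Fin n → Fin k → ℝ}
  (hv : ∑ i, Matrix.vecMulVec (v i) (v i) = (1 : Matrix (Fin k) (Fin k) ℝ))

include hv in
lemma rot_frame (i j : Fin n) (hij : i ≠ j) (c : ℝ) (hc : c*c = 1/2) :
    ∑ m, Matrix.vecMulVec (rotW v i j c m) (rotW v i j c m)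
      = (1 : Matrix (Fin k) (Fin k) ℝ) := by
  rw [← hv]
  ext b d
  rw [Matrix.sum_apply, Matrix.sum_apply]
  simp only [Matrix.vecMulVec_apply]
  have key : ∑ m, (rotW v i j c m b * rotW v i j c m d - v m b * v m d) = 0 := by
    rw [← Finset.sum_subset (Finset.subset_univ ({i, j} : Finset (Fin n)))
      (fun m _ hm => ?_)]
    · rw [Finset.sum_pair hij]
      have hwi : rotW v i j c i = c • (v i + v j) := by
        rw [rotW, Function.update_of_ne hij, Function.update_self]
      have hwj : rotW v i j c j = c • (v i - v j) := by
        rw [rotW, Function.update_self]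
      rw [hwi, hwj]
      simp only [Pi.smul_apply, Pi.add_apply, Pi.sub_apply, smul_eq_mul]
      linear_combination ((v i b + v j b)*(v i d + v j d)
        + (v i b - v j b)*(v i d - v j d)) * hc
    · have hmi : m ≠ i := fun h => hm (by rw [h]; exact Finset.mem_insert_self _ _)
      have hmj : m ≠ j := fun h => hm (by rw [h]; simp)
      rw [rotW, Function.update_of_ne hmj, Function.update_of_ne hmi]
      ring
  rw [Finset.sum_sub_distrib] at key
  linarith

variable (hmax : ∀ w : Fin n → Fin k → ℝ,
      (∑ i, Matrix.vecMulVec (w i) (w i) = (1 : Matrix (Fin k) (Fin k) ℝ)) →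
      zonVol w ≤ zonVol v)

include hv hmax in
lemma lemB (i j : Fin n) (hij : i ≠ j) :
    (Real.sqrt 2 - 1) * Fi v j ≤ Fi v i := by
  classical
  have h2 : Real.sqrt 2 * Real.sqrt 2 = 2 := Real.mul_self_sqrt (by norm_num)
  set c : ℝ := Real.sqrt 2 / 2 with hcdef
  have hc : c * c = 1/2 := by rw [hcdef, div_mul_div_comm, h2]; norm_num
  have hc0 : 0 ≤ c := by rw [hcdef]; positivity
  have hs2 : Real.sqrt 2 = 2 * c := by rw [hcdef]; ring
  have hle := hmax (rotW v i j c) (rot_frame hv i j hij c hc)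
  set cls3 := Finset.univ.filter
    (fun L : {s : Finset (Fin n) // s.card = k} => i ∈ L.1 ∧ j ∉ L.1) with hcls3
  set cls4 := Finset.univ.filter
    (fun L : {s : Finset (Fin n) // s.card = k} => j ∈ L.1 ∧ i ∉ L.1) with hcls4
  have hswapcard : ∀ L : {s : Finset (Fin n) // s.card = k},
      (L.1.image (Equiv.swap i j)).card = k := fun L => by
    rw [Finset.card_image_of_injective _ (Equiv.injective _), L.2]
  set σ : {s : Finset (Fin n) // s.card = k} → {s : Finset (Fin n) // s.card = k} :=
    fun L => ⟨L.1.image (Equiv.swap i j), hswapcard L⟩ with hσ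
  have hσmem : ∀ (L : {s : Finset (Fin n) // s.card = k}) (x : Fin n),
      x ∈ (σ L).1 ↔ Equiv.swap i j x ∈ L.1 := by
    intro L x
    constructor
    · intro hx
      rcases Finset.mem_image.1 hx with ⟨y, hy, rfl⟩
      rwa [Equiv.swap_apply_self]
    · intro hx
      exact Finset.mem_image.2 ⟨_, hx, Equiv.swap_apply_self _ _ _⟩
  have hσσ : ∀ L, σ (σ L) = L := by
    intro L
    apply Subtype.ext
    ext x
    rw [hσmem (σ L) x, hσmem L, Equiv.swap_apply_self]
  have hσ34 : ∀ L ∈ cls3, σ L ∈ cls4 := by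
    intro L hL
    obtain ⟨hiL, hjL⟩ := (Finset.mem_filter.1 hL).2
    refine Finset.mem_filter.2 ⟨Finset.mem_univ _, ?_, ?_⟩
    · rw [hσmem]; rwa [Equiv.swap_apply_right]
    · rw [hσmem]; rwa [Equiv.swap_apply_left]
  have hσ43 : ∀ L ∈ cls4, σ L ∈ cls3 := by
    intro L hL
    obtain ⟨hjL, hiL⟩ := (Finset.mem_filter.1 hL).2
    refine Finset.mem_filter.2 ⟨Finset.mem_univ _, ?_, ?_⟩
    · rw [hσmem]; rwa [Equiv.swap_apply_left]
    · rw [hσmem]; rwa [Equiv.swap_apply_right]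
  have hσset : ∀ L ∈ cls3, (σ L).1 = insert j (L.1.erase i) := by
    intro L hL
    obtain ⟨hiL, hjL⟩ := (Finset.mem_filter.1 hL).2
    ext x
    rw [hσmem]
    by_cases hx1 : x = i
    · subst hx1
      simp [Equiv.swap_apply_left, hjL, hij]
    · by_cases hx2 : x = j
      · subst hx2
        simp [Equiv.swap_apply_right, hiL]
      · rw [Equiv.swap_apply_of_ne_of_ne hx1 hx2]
        simp [Finset.mem_insert, Finset.mem_erase, hx1, hx2]
  have hreidx : ∀ g : {s : Finset (Fin n) // s.card = k} → ℝ,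
      ∑ L ∈ cls4, g L = ∑ L ∈ cls3, g (σ L) :=
    fun g => Finset.sum_nbij' σ σ hσ43 hσ34 (fun L _ => hσσ L) (fun L _ => hσσ L)
      (fun L _ => by rw [hσσ])
  have hsplit : zonVol v - zonVol (rotW v i j c)
      = ∑ L ∈ cls3, (|(mat v L).det| - |(mat (rotW v i j c) L).det|)
        + ∑ L ∈ cls4, (|(mat v L).det| - |(mat (rotW v i j c) L).det|) := by
    have h0 : ∀ L ∈ (Finset.univ : Finset {s : Finset (Fin n) // s.card = k}),
        L ∉ cls3 ∪ cls4 → |(mat v L).det| - |(mat (rotW v i j c) L).det| = 0 := by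
      intro L _ hL
      rw [Finset.mem_union] at hL
      push_neg at hL
      obtain ⟨hL3, hL4⟩ := hL
      rw [hcls3, Finset.mem_filter] at hL3
      rw [hcls4, Finset.mem_filter] at hL4
      by_cases hiL : i ∈ L.1 <;> by_cases hjL : j ∈ L.1
      · rw [rot_both v i j c hc hij L hiL hjL, abs_neg]; ring
      · exact absurd ⟨Finset.mem_univ _, hiL, hjL⟩ hL3
      · exact absurd ⟨Finset.mem_univ _, hjL, hiL⟩ hL4
      · rw [rot_neither v i j c L hiL hjL]; ring
    have hdisj : Disjoint cls3 cls4 := by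
      rw [Finset.disjoint_left]
      intro L h3 h4
      exact ((Finset.mem_filter.1 h4).2.2) ((Finset.mem_filter.1 h3).2.1)
    calc zonVol v - zonVol (rotW v i j c)
        = ∑ L : {s : Finset (Fin n) // s.card = k},
            (|(mat v L).det| - |(mat (rotW v i j c) L).det|) := by
          rw [zonVol_eq, zonVol_eq, Finset.sum_sub_distrib]
      _ = ∑ L ∈ cls3 ∪ cls4, (|(mat v L).det| - |(mat (rotW v i j c) L).det|) :=
          (Finset.sum_subset (Finset.subset_univ _) h0).symm
      _ = _ := Finset.sum_union hdisj
  have hperL : ∀ L ∈ cls3,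
      (|(mat v L).det| - |(mat (rotW v i j c) L).det|)
        + (|(mat v (σ L)).det| - |(mat (rotW v i j c) (σ L)).det|)
      ≤ |(mat v L).det| + (1 - 2*c) * |(mat v (σ L)).det| := by
    intro L hL
    obtain ⟨hiL, hjL⟩ := (Finset.mem_filter.1 hL).2
    have hp := rot_pair v i j c hc hc0 hij L (σ L) hiL hjL (hσset L hL)
    linarith
  have hmain : (2*c - 1) * ∑ L ∈ cls3, |(mat v (σ L)).det| ≤ ∑ L ∈ cls3, |(mat v L).det| := by
    have h1 : 0 ≤ zonVol v - zonVol (rotW v i j c) := by linarith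
    rw [hsplit, hreidx (fun L => |(mat v L).det| - |(mat (rotW v i j c) L).det|)] at h1
    have h3 := Finset.sum_le_sum hperL
    have e0 : ∑ L ∈ cls3, ((|(mat v L).det| - |(mat (rotW v i j c) L).det|)
        + (|(mat v (σ L)).det| - |(mat (rotW v i j c) (σ L)).det|))
        = ∑ L ∈ cls3, (|(mat v L).det| - |(mat (rotW v i j c) L).det|)
          + ∑ L ∈ cls3, (|(mat v (σ L)).det| - |(mat (rotW v i j c) (σ L)).det|) :=
      Finset.sum_add_distrib
    have e1 : ∑ L ∈ cls3, (|(mat v L).det| + (1 - 2*c) * |(mat v (σ L)).det|)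
        = ∑ L ∈ cls3, |(mat v L).det| + (1-2*c) * ∑ L ∈ cls3, |(mat v (σ L)).det| := by
      rw [Finset.sum_add_distrib, Finset.mul_sum]
    rw [e0, e1] at h3
    linarith
  -- decompose Fi
  have hFi : ∀ m : Fin n, Fi v m = ∑ L ∈ Finset.univ.filter
      (fun L : {s : Finset (Fin n) // s.card = k} => m ∈ L.1), |(mat v L).det| := by
    intro m
    rw [Finset.sum_filter]
    rfl
  have hsplit_i := Finset.sum_filter_add_sum_filter_not
    (Finset.univ.filter (fun L : {s : Finset (Fin n) // s.card = k} => i ∈ L.1))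
    (fun L : {s : Finset (Fin n) // s.card = k} => j ∈ L.1)
    (fun L : {s : Finset (Fin n) // s.card = k} => |(mat v L).det|)
  rw [Finset.filter_filter, Finset.filter_filter] at hsplit_i
  have hsplit_j := Finset.sum_filter_add_sum_filter_not
    (Finset.univ.filter (fun L : {s : Finset (Fin n) // s.card = k} => j ∈ L.1))
    (fun L : {s : Finset (Fin n) // s.card = k} => i ∈ L.1)
    (fun L : {s : Finset (Fin n) // s.card = k} => |(mat v L).det|)
  rw [Finset.filter_filter, Finset.filter_filter] at hsplit_j
  have hdecompi : Fi v i = (∑ L ∈ Finset.univ.filter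
      (fun L : {s : Finset (Fin n) // s.card = k} => i ∈ L.1 ∧ j ∈ L.1), |(mat v L).det|)
      + ∑ L ∈ cls3, |(mat v L).det| := by
    rw [hFi i, ← hsplit_i, hcls3]
  have hPeq : (∑ L ∈ Finset.univ.filter
        (fun L : {s : Finset (Fin n) // s.card = k} => j ∈ L.1 ∧ i ∈ L.1), |(mat v L).det|)
      = ∑ L ∈ Finset.univ.filter
        (fun L : {s : Finset (Fin n) // s.card = k} => i ∈ L.1 ∧ j ∈ L.1), |(mat v L).det| := by
    apply Finset.sum_congr _ (fun x _ => rfl)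
    apply Finset.filter_congr
    intro L _
    exact and_comm
  have hdecompj : Fi v j = (∑ L ∈ Finset.univ.filter
      (fun L : {s : Finset (Fin n) // s.card = k} => i ∈ L.1 ∧ j ∈ L.1), |(mat v L).det|)
      + ∑ L ∈ cls3, |(mat v (σ L)).det| := by
    rw [hFi j, ← hsplit_j, hPeq, ← hcls4, hreidx (fun L => |(mat v L).det|)]
  have hP0 : 0 ≤ ∑ L ∈ Finset.univ.filter
      (fun L : {s : Finset (Fin n) // s.card = k} => i ∈ L.1 ∧ j ∈ L.1), |(mat v L).det| :=
    Finset.sum_nonneg fun L _ => abs_nonneg _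
  have hS40 : 0 ≤ ∑ L ∈ cls3, |(mat v (σ L)).det| :=
    Finset.sum_nonneg fun L _ => abs_nonneg _
  have hsqrt2 : Real.sqrt 2 ≤ 2 := by nlinarith [Real.sqrt_nonneg 2]
  rw [hdecompi, hdecompj, hs2]
  nlinarith [hmain, hP0, hS40]

end LemB


section Pos

variable {v : Fin n → Fin k → ℝ}
  (hv : ∑ i, Matrix.vecMulVec (v i) (v i) = (1 : Matrix (Fin k) (Fin k) ℝ))

include hv in
lemma zonVol_pos : 0 < zonVol v := by
  classical
  have hspan : ∀ x : Fin k → ℝ, x ∈ Submodule.span ℝ (Set.range v) := by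
    intro x
    have hx : x = ∑ m, (x ⬝ᵥ v m) • v m := by
      funext b
      rw [Finset.sum_apply]
      simp only [Pi.smul_apply, smul_eq_mul]
      exact (frame_sum1 hv x b).symm
    rw [hx]
    exact Submodule.sum_mem _ fun m _ =>
      Submodule.smul_mem _ _ (Submodule.subset_span ⟨m, rfl⟩)
  obtain ⟨b, hbsub, hbspan, hbli⟩ := exists_linearIndependent ℝ (Set.range v)
  have hbspan' : Submodule.span ℝ b = ⊤ := by
    rw [hbspan]
    exact top_unique fun x _ => hspan x
  have hbfin : b.Finite := hbli.setFinite
  haveI := hbfin.fintype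
  let hbasis : Module.Basis b ℝ (Fin k → ℝ) :=
    Module.Basis.mk hbli (by rw [Subtype.range_coe]; rw [hbspan'])
  have hcard : Fintype.card b = k := by
    have h1 := Module.finrank_eq_card_basis hbasis
    rw [Module.finrank_fin_fun] at h1
    exact h1.symm
  have hchoice : ∀ x : b, ∃ m : Fin n, v m = (x : Fin k → ℝ) := fun x => hbsub x.2
  choose φ hφ using hchoice
  have hφinj : Function.Injective φ := by
    intro x y hxy
    apply Subtype.ext
    rw [← hφ x, ← hφ y, hxy]
  have hL0card : (Finset.univ.image φ).card = k := by
    rw [Finset.card_image_of_injective _ hφinj, Finset.card_univ, hcard]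
  set L : {s : Finset (Fin n) // s.card = k} := ⟨Finset.univ.image φ, hL0card⟩ with hL
  have hcols : ∀ b' : Fin k, ∃ x : b, φ x = (L.1.orderIsoOfFin L.2 b' : Fin n) := by
    intro b'
    have hmem : ((L.1.orderIsoOfFin L.2 b' : Fin n)) ∈ Finset.univ.image φ :=
      (L.1.orderIsoOfFin L.2 b').2
    rcases Finset.mem_image.1 hmem with ⟨x, _, hx⟩
    exact ⟨x, hx⟩
  choose ψ hψ using hcols
  have hψinj : Function.Injective ψ := by
    intro b1 b2 h12
    have h3 : (L.1.orderIsoOfFin L.2 b1 : Fin n) = (L.1.orderIsoOfFin L.2 b2 : Fin n) := by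
      rw [← hψ b1, ← hψ b2, h12]
    have h4 : L.1.orderIsoOfFin L.2 b1 = L.1.orderIsoOfFin L.2 b2 := Subtype.ext h3
    exact (L.1.orderIsoOfFin L.2).injective h4
  have hli2 : LinearIndependent ℝ (fun b' : Fin k => (mat v L)ᵀ b') := by
    have heq : (fun b' : Fin k => (mat v L)ᵀ b') = ((↑) : b → (Fin k → ℝ)) ∘ ψ := by
      funext b'
      show (fun a => v (L.1.orderIsoOfFin L.2 b') a) = _
      have h5 : v (L.1.orderIsoOfFin L.2 b') = ((ψ b' : b) : Fin k → ℝ) := by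
        rw [← hψ b', hφ (ψ b')]
      funext a
      exact congrFun h5 a
    rw [heq]
    exact hbli.comp ψ hψinj
  have hunit : IsUnit (mat v L) := Matrix.linearIndependent_cols_iff_isUnit.1 hli2
  have hdet0 : (mat v L).det ≠ 0 :=
    isUnit_iff_ne_zero.1 ((Matrix.isUnit_iff_isUnit_det _).1 hunit)
  rw [zonVol_eq]
  have hle := Finset.single_le_sum
    (f := fun L : {s : Finset (Fin n) // s.card = k} => |(mat v L).det|)
    (fun L _ => abs_nonneg _) (Finset.mem_univ L)
  have hpos : 0 < |(mat v L).det| := abs_pos.2 hdet0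
  linarith

end Pos

end Stmt17

/-- Theorem `th_ineq_v`: if the tight frame `v` (corresponding to
a maximizing subspace `H` of `H ↦ vol_k([0,1]^n | H)`, with `vᵢ` the projection
of `eᵢ` onto `H`) maximizes the zonotope volume `F` over tight frames, then
`|vᵢ|² ≥ (√2 − 1) |vⱼ|²` for all `i, j ∈ [n]`. -/
theorem stmt_17 (n k : ℕ) (v : Fin n → Fin k → ℝ)
    (hv : ∑ i, Matrix.vecMulVec (v i) (v i) = (1 : Matrix (Fin k) (Fin k) ℝ))
    (hmax : ∀ w : Fin n → Fin k → ℝ,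
      (∑ i, Matrix.vecMulVec (w i) (w i) = (1 : Matrix (Fin k) (Fin k) ℝ)) →
      zonVol w ≤ zonVol v)
    (i j : Fin n) :
    (Real.sqrt 2 - 1) * (v j ⬝ᵥ v j) ≤ v i ⬝ᵥ v i := by
  classical
  have h2 : Real.sqrt 2 * Real.sqrt 2 = 2 := Real.mul_self_sqrt (by norm_num)
  have hs2 : Real.sqrt 2 ≤ 2 := by nlinarith [Real.sqrt_nonneg 2]
  by_cases hij : i = j
  · subst hij
    have hq := Stmt17.p_nonneg (v := v) i
    nlinarith
  · have hA_i := Stmt17.lemA hv hmax i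
    have hA_j := Stmt17.lemA hv hmax j
    have hB := Stmt17.lemB hv hmax i j hij
    have hF := Stmt17.zonVol_pos hv
    rw [hA_i, hA_j] at hB
    rw [← mul_assoc] at hB
    exact le_of_mul_le_mul_right hB hF
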